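/- arXiv:2508.12159 — 3 statements merged into one kernel-verified Lean document; each statement's English description precedes it below -/
import Mathlib

section
/- Let A, B > 0 with B < 2·(A/3)^{3/2} and let Y₊ be the largest root of A·Y² − B·Y³ = 1. For each integer m ≥ 1, the m-th eigenvalue of the second-variation quadratic form B[g,g] on even Fourier modes g = √2·cos(2πmx) equals (4πm/Y₊²)·coth(2πm Y₊) − B, and these eigenvalues form a strictly increasing sequence in m. -/
set_option autoImplicit false

open Set Real MeasureTheory

section Aux

/-- derivative in the horizontal direction -/
lemma sv_deriv_aux1 (c K x : ℝ) : deriv (fun s => K * (Real.sqrt 2 * Real.cos (c * s))) x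
    = K * (Real.sqrt 2 * (-Real.sin (c * x) * c)) := by
  have h1 : HasDerivAt (fun s : ℝ => c * s) c x := by
    simpa using (hasDerivAt_id x).const_mul c
  have h2 := (Real.hasDerivAt_cos (c * x)).comp x h1
  exact ((h2.const_mul (Real.sqrt 2)).const_mul K).deriv

/-- derivative in the vertical direction -/
lemma sv_deriv_aux2 (c S G y : ℝ) : deriv (fun t => Real.sinh (c * t) / S * G) y
    = Real.cosh (c * y) * c / S * G := by
  have h1 : HasDerivAt (fun s : ℝ => c * s) c y := by
    simpa using (hasDerivAt_id y).const_mul c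
  have h2 := ((Real.hasDerivAt_sinh (c * y)).comp y h1).div_const S
  exact (h2.mul_const G).deriv

/-- positivity of the largest root -/
lemma sv_Yp_pos (A B Yp : ℝ) (hA : 0 < A) (hB : 0 < B)
    (hcond : B < 2 * (A / 3) ^ ((3 : ℝ) / 2))
    (hmax : ∀ Y : ℝ, A * Y ^ 2 - B * Y ^ 3 = 1 → Y ≤ Yp) : 0 < Yp := by
  have hx : (0:ℝ) < A/3 := by positivity
  have hsq : ((A/3) ^ ((3:ℝ)/2))^2 = (A/3)^3 := by
    rw [← Real.rpow_natCast ((A/3) ^ ((3:ℝ)/2)) 2, ← Real.rpow_mul hx.le,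
      show (3:ℝ)/2 * ((2:ℕ):ℝ) = ((3:ℕ):ℝ) by norm_num, Real.rpow_natCast]
  have hBlt : 27 * B^2 < 4 * A^3 := by
    have h1 : B^2 < (2 * (A/3) ^ ((3:ℝ)/2))^2 :=
      pow_lt_pow_left₀ hcond hB.le (by norm_num)
    rw [mul_pow, hsq] at h1
    nlinarith [h1]
  set Y1 : ℝ := 2*A/(3*B) with hY1
  have hY1pos : 0 < Y1 := by positivity
  have hfY1 : A * Y1^2 - B * Y1^3 = 4*A^3/(27*B^2) := by
    rw [hY1]; field_simp; ring
  have hgt : (1:ℝ) < A * Y1^2 - B * Y1^3 := by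
    rw [hfY1, lt_div_iff₀ (by positivity)]; nlinarith
  have hcont : ContinuousOn (fun Y : ℝ => A * Y^2 - B * Y^3) (Icc 0 Y1) := by fun_prop
  obtain ⟨Y, hYmem, hYeq⟩ := intermediate_value_Icc hY1pos.le hcont
    (show (1:ℝ) ∈ Icc (A * 0^2 - B * 0^3) (A * Y1^2 - B * Y1^3) by
      exact ⟨by norm_num, by linarith⟩)
  have hYne : Y ≠ 0 := by
    intro h; rw [h] at hYeq; simp at hYeq
  have hYpos : 0 < Y := lt_of_le_of_ne hYmem.1 (Ne.symm hYne)
  linarith [hmax Y hYeq]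

/-- strict monotonicity of `u ↦ u·coth u` -/
lemma sv_mono : StrictMonoOn (fun u : ℝ => u * Real.cosh u / Real.sinh u) (Ioi 0) := by
  apply strictMonoOn_of_deriv_pos (convex_Ioi 0)
  · apply ContinuousOn.div (by fun_prop) (by fun_prop)
    intro u hu
    exact ne_of_gt (Real.sinh_pos_iff.2 hu)
  · intro u hu
    rw [interior_Ioi] at hu
    have hs : Real.sinh u ≠ 0 := ne_of_gt (Real.sinh_pos_iff.2 hu)
    have hd : HasDerivAt (fun u : ℝ => u * Real.cosh u / Real.sinh u)
        (((1 * Real.cosh u + u * Real.sinh u) * Real.sinh u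
          - u * Real.cosh u * Real.cosh u) / Real.sinh u ^ 2) u :=
      ((hasDerivAt_id u).mul (Real.hasDerivAt_cosh u)).div (Real.hasDerivAt_sinh u) hs
    rw [hd.deriv]
    apply div_pos _ (by positivity)
    have h1 := Real.self_lt_sinh_iff.2 hu
    have h2 := Real.one_le_cosh u
    have h3 := Real.sinh_pos_iff.2 hu
    have h4 := Real.cosh_sq u
    nlinarith

/-- the inner (vertical) integral -/
lemma sv_inner (c Yp : ℝ) (hc : 0 < c) (hYp : 0 < Yp) (x : ℝ) :
    ∫ y in Ioo (0:ℝ) Yp, (2 / Yp ^ 2) *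
      ((Real.sinh (c*y) / Real.sinh (c*Yp) * (Real.sqrt 2 * (-Real.sin (c*x) * c))) ^ 2
        + (Real.cosh (c*y) * c / Real.sinh (c*Yp) * (Real.sqrt 2 * Real.cos (c*x))) ^ 2)
    = (2 / Yp ^ 2) * (2 * c ^ 2 / Real.sinh (c*Yp) ^ 2) *
      (Real.sin (c*x) ^ 2 * (Real.sinh (c*Yp) * Real.cosh (c*Yp) / (2*c) - Yp/2)
        + Real.cos (c*x) ^ 2 * (Real.sinh (c*Yp) * Real.cosh (c*Yp) / (2*c) + Yp/2)) := by
  have hS : Real.sinh (c*Yp) ≠ 0 := ne_of_gt (Real.sinh_pos_iff.2 (by positivity))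
  have h2 : Real.sqrt 2 ^ 2 = 2 := Real.sq_sqrt (by norm_num)
  rw [← integral_Ioc_eq_integral_Ioo, ← intervalIntegral.integral_of_le hYp.le]
  rw [intervalIntegral.integral_eq_sub_of_hasDerivAt
    (f := fun y => (2 / Yp ^ 2) * (2 * c ^ 2 / Real.sinh (c*Yp) ^ 2) *
      (Real.sin (c*x) ^ 2 * (Real.sinh (c*y) * Real.cosh (c*y) / (2*c) - y/2)
        + Real.cos (c*x) ^ 2 * (Real.sinh (c*y) * Real.cosh (c*y) / (2*c) + y/2)))
    (fun y _ => by
      have hcy : HasDerivAt (fun y : ℝ => c * y) c y := by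
        simpa using (hasDerivAt_id y).const_mul c
      have hsh : HasDerivAt (fun y : ℝ => Real.sinh (c*y)) (Real.cosh (c*y) * c) y :=
        (Real.hasDerivAt_sinh (c*y)).comp y hcy
      have hch : HasDerivAt (fun y : ℝ => Real.cosh (c*y)) (Real.sinh (c*y) * c) y :=
        (Real.hasDerivAt_cosh (c*y)).comp y hcy
      have hprod := (hsh.mul hch).div_const (2*c)
      have hid : HasDerivAt (fun y : ℝ => y/2) (1/2) y := by
        simpa using (hasDerivAt_id y).div_const 2
      have hfin := (((hprod.sub hid).const_mul (Real.sin (c*x) ^ 2)).add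
        ((hprod.add hid).const_mul (Real.cos (c*x) ^ 2))).const_mul
        ((2 / Yp ^ 2) * (2 * c ^ 2 / Real.sinh (c*Yp) ^ 2))
      have heq : (2 / Yp ^ 2) *
          ((Real.sinh (c*y) / Real.sinh (c*Yp) * (Real.sqrt 2 * (-Real.sin (c*x) * c))) ^ 2
            + (Real.cosh (c*y) * c / Real.sinh (c*Yp) * (Real.sqrt 2 * Real.cos (c*x))) ^ 2)
          = (2 / Yp ^ 2) * (2 * c ^ 2 / Real.sinh (c*Yp) ^ 2) *
            (Real.sin (c*x) ^ 2 *
              ((Real.cosh (c*y) * c * Real.cosh (c*y) + Real.sinh (c*y) * (Real.sinh (c*y) * c)) / (2*c) - 1/2)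
            + Real.cos (c*x) ^ 2 *
              ((Real.cosh (c*y) * c * Real.cosh (c*y) + Real.sinh (c*y) * (Real.sinh (c*y) * c)) / (2*c) + 1/2)) := by
        have h4 := Real.cosh_sq (c*y)
        have e1 : (Real.sinh (c*y) / Real.sinh (c*Yp) * (Real.sqrt 2 * (-Real.sin (c*x) * c))) ^ 2
            = 2 * (Real.sinh (c*y) ^ 2 * Real.sin (c*x) ^ 2 * c ^ 2) / Real.sinh (c*Yp) ^ 2 := by
          rw [mul_pow, mul_pow, h2]; field_simp
        have e2 : (Real.cosh (c*y) * c / Real.sinh (c*Yp) * (Real.sqrt 2 * Real.cos (c*x))) ^ 2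
            = 2 * (Real.cosh (c*y) ^ 2 * Real.cos (c*x) ^ 2 * c ^ 2) / Real.sinh (c*Yp) ^ 2 := by
          rw [mul_pow, mul_pow, h2]; field_simp
        rw [e1, e2, h4]
        field_simp
        linear_combination (-(1:ℝ) *
          (Real.sin (c*x)^2 + Real.cos (c*x)^2)) * h4
      rw [heq]
      exact hfin)
    (by apply Continuous.intervalIntegrable; fun_prop)]
  simp [mul_zero, Real.sinh_zero]

/-- the outer (horizontal) integral -/
lemma sv_outer (c Q W1 W2 : ℝ) (hc : 0 < c) (hsin : Real.sin c = 0) :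
    ∫ x in (0:ℝ)..1, Q * (Real.sin (c*x) ^ 2 * W1 + Real.cos (c*x) ^ 2 * W2)
      = Q * ((W1 + W2) / 2) := by
  rw [intervalIntegral.integral_eq_sub_of_hasDerivAt
    (f := fun x => Q * (W1 * (x/2 - Real.sin (c*x) * Real.cos (c*x) / (2*c))
      + W2 * (x/2 + Real.sin (c*x) * Real.cos (c*x) / (2*c))))
    (fun x _ => by
      have hcx : HasDerivAt (fun x : ℝ => c * x) c x := by
        simpa using (hasDerivAt_id x).const_mul c
      have hs : HasDerivAt (fun x : ℝ => Real.sin (c*x)) (Real.cos (c*x) * c) x :=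
        (Real.hasDerivAt_sin (c*x)).comp x hcx
      have hco : HasDerivAt (fun x : ℝ => Real.cos (c*x)) (-Real.sin (c*x) * c) x :=
        (Real.hasDerivAt_cos (c*x)).comp x hcx
      have hprod := (hs.mul hco).div_const (2*c)
      have hid : HasDerivAt (fun x : ℝ => x/2) (1/2) x := by
        simpa using (hasDerivAt_id x).div_const 2
      have hfin := (((hid.sub hprod).const_mul W1).add
        ((hid.add hprod).const_mul W2)).const_mul Q
      have hr : (Real.cos (c*x) * c * Real.cos (c*x)
            + Real.sin (c*x) * (-Real.sin (c*x) * c)) / (2*c)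
          = (Real.cos (c*x) ^ 2 - Real.sin (c*x) ^ 2) / 2 := by
        field_simp; ring
      have heq : Q * (Real.sin (c*x) ^ 2 * W1 + Real.cos (c*x) ^ 2 * W2)
          = Q * (W1 * (1/2 - (Real.cos (c*x) * c * Real.cos (c*x)
              + Real.sin (c*x) * (-Real.sin (c*x) * c)) / (2*c))
            + W2 * (1/2 + (Real.cos (c*x) * c * Real.cos (c*x)
              + Real.sin (c*x) * (-Real.sin (c*x) * c)) / (2*c))) := by
        rw [hr]
        have h5 := Real.sin_sq_add_cos_sq (c*x)
        linear_combination (Q * (W1 + W2) / 2) * h5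
      rw [heq]
      exact hfin)
    (by apply Continuous.intervalIntegrable; fun_prop)]
  simp only [mul_one, mul_zero, hsin, zero_mul, zero_div, Real.sin_zero, mul_comm]
  ring

/-- normalization of the Fourier mode -/
lemma sv_norm (c : ℝ) (hc : 0 < c) (hsin : Real.sin c = 0) :
    ∫ x in (0:ℝ)..1, (Real.sqrt 2 * Real.cos (c*x)) ^ 2 = 1 := by
  have h2 : Real.sqrt 2 ^ 2 = 2 := Real.sq_sqrt (by norm_num)
  rw [intervalIntegral.integral_eq_sub_of_hasDerivAt
    (f := fun x => x + Real.sin (c*x) * Real.cos (c*x) / c)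
    (fun x _ => by
      have hcx : HasDerivAt (fun x : ℝ => c * x) c x := by
        simpa using (hasDerivAt_id x).const_mul c
      have hs : HasDerivAt (fun x : ℝ => Real.sin (c*x)) (Real.cos (c*x) * c) x :=
        (Real.hasDerivAt_sin (c*x)).comp x hcx
      have hco : HasDerivAt (fun x : ℝ => Real.cos (c*x)) (-Real.sin (c*x) * c) x :=
        (Real.hasDerivAt_cos (c*x)).comp x hcx
      have hfin := (hasDerivAt_id x).add ((hs.mul hco).div_const c)
      have hr : (Real.cos (c*x) * c * Real.cos (c*x)
            + Real.sin (c*x) * (-Real.sin (c*x) * c)) / c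
          = Real.cos (c*x) ^ 2 - Real.sin (c*x) ^ 2 := by
        field_simp; ring
      have heq : (Real.sqrt 2 * Real.cos (c*x)) ^ 2
          = 1 + (Real.cos (c*x) * c * Real.cos (c*x)
              + Real.sin (c*x) * (-Real.sin (c*x) * c)) / c := by
        rw [hr, mul_pow, h2]
        have h5 := Real.sin_sq_add_cos_sq (c*x)
        linear_combination h5
      rw [heq]
      exact hfin)
    (by apply Continuous.intervalIntegrable; fun_prop)]
  simp [mul_zero, mul_one, hsin]

/-- sin(2πm) = 0 -/
lemma sv_sin (m : ℕ) : Real.sin (2 * π * m) = 0 := by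
  rw [show 2 * π * (m:ℝ) = ((2*m : ℕ):ℝ) * π by push_cast; ring]
  exact Real.sin_nat_mul_pi _

end Aux

/- Diagonalization of the second-variation quadratic form on even Fourier modes
`g = √2·cos(2πmx)`: the eigenvalue is `(4πm/Yp²)·coth(2πmYp) − B`, and these
eigenvalues are strictly increasing in `m`. -/
theorem second_variation_eigenvalues (A B Yp : ℝ) (hA : 0 < A) (hB : 0 < B)
    (hcond : B < 2 * (A / 3) ^ ((3 : ℝ) / 2))
    (hroot : A * Yp ^ 2 - B * Yp ^ 3 = 1)
    (hmax : ∀ Y : ℝ, A * Y ^ 2 - B * Y ^ 3 = 1 → Y ≤ Yp) :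
    (∀ m : ℕ, 1 ≤ m →
      (∫ p in (Ioo (0:ℝ) 1 ×ˢ Ioo 0 Yp),
          (2 / Yp ^ 2) *
          ((deriv (fun s => Real.sinh (2 * π * m * p.2) / Real.sinh (2 * π * m * Yp)
              * (Real.sqrt 2 * Real.cos (2 * π * m * s))) p.1) ^ 2
            + (deriv (fun t => Real.sinh (2 * π * m * t) / Real.sinh (2 * π * m * Yp)
              * (Real.sqrt 2 * Real.cos (2 * π * m * p.1))) p.2) ^ 2))
        - B * (∫ x in (0:ℝ)..1, (Real.sqrt 2 * Real.cos (2 * π * m * x)) ^ 2)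
      = 4 * π * m / Yp ^ 2 * (Real.cosh (2 * π * m * Yp) / Real.sinh (2 * π * m * Yp)) - B) ∧
    (∀ m m' : ℕ, 1 ≤ m → m < m' →
      4 * π * m / Yp ^ 2 * (Real.cosh (2 * π * m * Yp) / Real.sinh (2 * π * m * Yp)) - B
        < 4 * π * m' / Yp ^ 2 * (Real.cosh (2 * π * m' * Yp) / Real.sinh (2 * π * m' * Yp)) - B) := by
  have hYp : 0 < Yp := sv_Yp_pos A B Yp hA hB hcond hmax
  constructor
  · intro m hm
    have hm1 : (1:ℝ) ≤ (m:ℝ) := by exact_mod_cast hm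
    set c : ℝ := 2 * π * m with hcdef
    have hm0 : (0:ℝ) < (m:ℝ) := by linarith
    have hc : 0 < c := by
      rw [hcdef]; exact mul_pos (mul_pos two_pos Real.pi_pos) hm0
    have hsin : Real.sin c = 0 := by rw [hcdef]; exact sv_sin m
    have hS : Real.sinh (c*Yp) ≠ 0 := ne_of_gt (Real.sinh_pos_iff.2 (by positivity))
    simp only [sv_deriv_aux1, sv_deriv_aux2]
    rw [Measure.volume_eq_prod]
    rw [MeasureTheory.setIntegral_prod _ (by
      apply (Continuous.continuousOn (by fun_prop)).integrableOn_compact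
        (isCompact_Icc.prod isCompact_Icc) |>.mono_set
      exact Set.prod_mono Ioo_subset_Icc_self Ioo_subset_Icc_self)]
    simp only [sv_inner c Yp hc hYp]
    rw [← MeasureTheory.integral_Ioc_eq_integral_Ioo,
      ← intervalIntegral.integral_of_le (by norm_num : (0:ℝ) ≤ 1)]
    rw [sv_outer c _ _ _ hc hsin, sv_norm c hc hsin]
    rw [show Real.sinh (c*Yp) * Real.cosh (c*Yp) / (2*c) - Yp/2
        + (Real.sinh (c*Yp) * Real.cosh (c*Yp) / (2*c) + Yp/2)
      = Real.sinh (c*Yp) * Real.cosh (c*Yp) / c by ring]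
    rw [hcdef]
    field_simp
    ring
  · intro m m' hm hmm'
    have hm1 : (1:ℝ) ≤ (m:ℝ) := by exact_mod_cast hm
    have hmm : (m:ℝ) < (m':ℝ) := by exact_mod_cast hmm'
    have hpi := Real.pi_pos
    have hm0 : (0:ℝ) < (m:ℝ) := by linarith
    have hm0' : (0:ℝ) < (m':ℝ) := by linarith
    have hu : (0:ℝ) < 2 * π * m * Yp := mul_pos (mul_pos (mul_pos two_pos hpi) hm0) hYp
    have hu' : (0:ℝ) < 2 * π * m' * Yp := mul_pos (mul_pos (mul_pos two_pos hpi) hm0') hYp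
    have hlt : 2 * π * m * Yp < 2 * π * m' * Yp := by nlinarith
    have key : (2 * π * m * Yp) * Real.cosh (2 * π * m * Yp) / Real.sinh (2 * π * m * Yp)
        < (2 * π * m' * Yp) * Real.cosh (2 * π * m' * Yp) / Real.sinh (2 * π * m' * Yp) :=
      sv_mono hu hu' hlt
    have hS : Real.sinh (2 * π * m * Yp) ≠ 0 := ne_of_gt (Real.sinh_pos_iff.2 hu)
    have hS' : Real.sinh (2 * π * m' * Yp) ≠ 0 := ne_of_gt (Real.sinh_pos_iff.2 hu')
    have e1 : 4 * π * m / Yp ^ 2 * (Real.cosh (2 * π * m * Yp) / Real.sinh (2 * π * m * Yp))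
        = (2 / Yp^3) * ((2 * π * m * Yp) * Real.cosh (2 * π * m * Yp) / Real.sinh (2 * π * m * Yp)) := by
      field_simp; ring
    have e1' : 4 * π * m' / Yp ^ 2 * (Real.cosh (2 * π * m' * Yp) / Real.sinh (2 * π * m' * Yp))
        = (2 / Yp^3) * ((2 * π * m' * Yp) * Real.cosh (2 * π * m' * Yp) / Real.sinh (2 * π * m' * Yp)) := by
      field_simp; ring
    rw [e1, e1']
    have hQ : (0:ℝ) < 2 / Yp^3 := by positivity
    have := mul_lt_mul_of_pos_left key hQ
    linarith
end

section
/- Let A, B > 0 with B < 2·(A/3)^{3/2}, and suppose 2·(A/B − Y₊)·2π·coth(2π Y₊) < 1, where Y₊ is the largest root of A·Y² − B·Y³ = 1. Then both eigenvalues 2/Y₊³ − B and (4π/Y₊²)·coth(2π Y₊) − B are negative (so the flat solution U₊ has Morse index at least 2 for the second variation form). -/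
set_option autoImplicit false

open Set Real

/- Under the instability condition `2(A/B − Yp)·2π·coth(2πYp) < 1`, both the
first two eigenvalues of the second variation at the flat solution `U₊` are
negative, so `U₊` has Morse index at least 2. -/
theorem flat_solution_morse_index_two (A B Yp : ℝ) (hA : 0 < A) (hB : 0 < B)
    (hcond : B < 2 * (A / 3) ^ ((3 : ℝ) / 2))
    (hroot : A * Yp ^ 2 - B * Yp ^ 3 = 1)
    (hmax : ∀ Y : ℝ, A * Y ^ 2 - B * Y ^ 3 = 1 → Y ≤ Yp)
    (hYp : Yp ∈ Ioo (2 / 3 * (A / B)) (A / B))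
    (hineq : 2 * (A / B - Yp) * (2 * π)
        * (Real.cosh (2 * π * Yp) / Real.sinh (2 * π * Yp)) < 1) :
    2 / Yp ^ 3 - B < 0 ∧
    4 * π / Yp ^ 2 * (Real.cosh (2 * π * Yp) / Real.sinh (2 * π * Yp)) - B < 0 := by
  obtain ⟨h1, h2⟩ := hYp
  have hABpos : 0 < A / B := div_pos hA hB
  have hYp0 : 0 < Yp := lt_trans (by positivity) h1
  have h2A : 2 * A < 3 * B * Yp := by
    have := (div_lt_iff₀ hB).mp ((lt_div_iff₀' (by norm_num : (0:ℝ) < 2/3)).mpr h1)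
    nlinarith
  constructor
  · have hBY3 : 2 < B * Yp ^ 3 := by nlinarith [sq_nonneg Yp, mul_pos hYp0 hYp0]
    have : 2 / Yp ^ 3 < B := (div_lt_iff₀ (by positivity)).mpr (by linarith)
    linarith
  · set C := Real.cosh (2 * π * Yp) / Real.sinh (2 * π * Yp) with hC
    have key : A / B - Yp = 1 / (B * Yp ^ 2) := by
      field_simp
      nlinarith
    rw [key] at hineq
    have h4 : 4 * π * C < B * Yp ^ 2 := by
      have hb : 0 < B * Yp ^ 2 := by positivity
      have e : 2 * (1 / (B * Yp ^ 2)) * (2 * π) * C = 4 * π * C / (B * Yp ^ 2) := by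
        ring
      rw [e] at hineq
      exact (div_lt_one hb).mp hineq
    have : 4 * π / Yp ^ 2 * C < B := by
      rw [div_mul_eq_mul_div, div_lt_iff₀ (by positivity : (0:ℝ) < Yp ^ 2)]
      nlinarith
    linarith
end

section
/- Let u ∈ W^{1,2}(𝕋 × (0, T)) with u(x, 0) = 1 for a.e. x, and suppose E[u] is minimal among all such functions, where E[u] = ∫ (|∇u|² + χ_{u>0}·(A−By)₊). Then u is independent of x almost everywhere. (Key inequality: E[u] ≥ ∫ |u_x|² + inf over 1D profiles, so any minimizer has u_x = 0 a.e.) -/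
set_option autoImplicit false

open Set MeasureTheory

lemma opnorm_sq_ge (L : ℝ × ℝ →L[ℝ] ℝ) :
    (L (1,0))^2 + (L (0,1))^2 ≤ ‖L‖^2 := by
  set a := L (1,0) with ha
  set b := L (0,1) with hb
  obtain ⟨s, hs, hsa⟩ : ∃ s : ℝ, |s| ≤ 1 ∧ s * a = |a| := by
    rcases le_or_gt 0 a with h | h
    · exact ⟨1, by norm_num, by rw [one_mul, abs_of_nonneg h]⟩
    · exact ⟨-1, by norm_num, by rw [neg_one_mul, abs_of_neg h]⟩
  obtain ⟨t, ht, htb⟩ : ∃ t : ℝ, |t| ≤ 1 ∧ t * b = |b| := by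
    rcases le_or_gt 0 b with h | h
    · exact ⟨1, by norm_num, by rw [one_mul, abs_of_nonneg h]⟩
    · exact ⟨-1, by norm_num, by rw [neg_one_mul, abs_of_neg h]⟩
  have h1 : L (s, t) = s * a + t * b := by
    have h0 : ((s, t) : ℝ × ℝ) = s • ((1:ℝ),(0:ℝ)) + t • ((0:ℝ),(1:ℝ)) := by
      simp [Prod.ext_iff]
    rw [h0, map_add, L.map_smul, L.map_smul, ha, hb]
    simp [smul_eq_mul]
  have h2 : |L (s,t)| ≤ ‖L‖ * ‖((s,t) : ℝ × ℝ)‖ := by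
    simpa using L.le_opNorm (s, t)
  have h3 : ‖((s,t) : ℝ × ℝ)‖ ≤ 1 := by
    rw [Prod.norm_def]
    exact max_le (by simpa using hs) (by simpa using ht)
  have key : |a| + |b| ≤ ‖L‖ := by
    have h4 : |a| + |b| ≤ |L (s,t)| := by
      rw [h1, hsa, htb]; exact le_abs_self _
    nlinarith [norm_nonneg L, abs_nonneg (L (s,t))]
  nlinarith [abs_nonneg a, abs_nonneg b, sq_abs a, sq_abs b, norm_nonneg L]

lemma integrable_comp_snd {h : ℝ → ℝ} {μ ν : Measure ℝ} [SFinite ν] [IsFiniteMeasure μ]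
    (hm : AEStronglyMeasurable (fun p : ℝ × ℝ => h p.2) (μ.prod ν))
    (hh : Integrable h ν) : Integrable (fun p : ℝ × ℝ => h p.2) (μ.prod ν) := by
  rw [MeasureTheory.integrable_prod_iff hm]
  exact ⟨Filter.Eventually.of_forall fun x => hh, integrable_const (∫ y, ‖h y‖ ∂ν)⟩

/- A minimizer of the Alt–Caffarelli-type energy
`E[u] = ∫ (|∇u|² + χ_{u>0}(A−By)₊)` over `𝕋 × (0, T)` with boundary value
`u(x,0) = 1` is independent of `x` almost everywhere. -/
theorem minimizer_is_one_dimensional (A B T : ℝ) (hA : 0 < A) (hB : 0 < B)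
    (hT : 0 < T) (u : ℝ × ℝ → ℝ)
    (hu_diff : Differentiable ℝ u)
    (hu_per : ∀ x y : ℝ, u (x + 1, y) = u (x, y))
    (hu_bdry : ∀ᵐ x : ℝ, u (x, 0) = 1)
    (hu_int : IntegrableOn (fun p : ℝ × ℝ => ‖fderiv ℝ u p‖ ^ 2)
      (Ioo (0:ℝ) 1 ×ˢ Ioo 0 T))
    (hmin : ∀ v : ℝ × ℝ → ℝ,
      Differentiable ℝ v →
      (∀ x y : ℝ, v (x + 1, y) = v (x, y)) →
      (∀ᵐ x : ℝ, v (x, 0) = 1) →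
      IntegrableOn (fun p : ℝ × ℝ => ‖fderiv ℝ v p‖ ^ 2)
        (Ioo (0:ℝ) 1 ×ˢ Ioo 0 T) →
      (∫ p in (Ioo (0:ℝ) 1 ×ˢ Ioo 0 T),
          (‖fderiv ℝ u p‖ ^ 2 + if 0 < u p then max (A - B * p.2) 0 else 0))
        ≤ ∫ p in (Ioo (0:ℝ) 1 ×ˢ Ioo 0 T),
          (‖fderiv ℝ v p‖ ^ 2 + if 0 < v p then max (A - B * p.2) 0 else 0)) :
    ∃ f : ℝ → ℝ, ∀ᵐ p ∂(volume.restrict (Ioo (0:ℝ) 1 ×ˢ Ioo 0 T)), u p = f p.2 := by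
  classical
  have hu_cont : Continuous u := hu_diff.continuous
  have hRxm : MeasurableSet (Ioo (0:ℝ) 1) := measurableSet_Ioo
  have hRym : MeasurableSet (Ioo (0:ℝ) T) := measurableSet_Ioo
  have hRm : MeasurableSet (Ioo (0:ℝ) 1 ×ˢ Ioo 0 T) := hRxm.prod hRym
  have hprod : (volume : Measure (ℝ×ℝ)).restrict (Ioo (0:ℝ) 1 ×ˢ Ioo 0 T) =
      (volume.restrict (Ioo (0:ℝ) 1)).prod (volume.restrict (Ioo (0:ℝ) T)) := by
    rw [Measure.prod_restrict, ← Measure.volume_eq_prod]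
  haveI : IsFiniteMeasure (volume.restrict (Ioo (0:ℝ) 1)) :=
    ⟨by rw [Measure.restrict_apply_univ]; exact measure_Ioo_lt_top⟩
  haveI : IsFiniteMeasure (volume.restrict (Ioo (0:ℝ) T)) :=
    ⟨by rw [Measure.restrict_apply_univ]; exact measure_Ioo_lt_top⟩
  -- abbreviations (as plain defs via `let` blocks are avoided; we use explicit terms)
  -- χ : the potential term
  -- measurability facts
  have hmes_ux : Measurable (fun p : ℝ × ℝ => fderiv ℝ u p ((1:ℝ), (0:ℝ))) :=
    measurable_fderiv_apply_const ℝ u ((1:ℝ), (0:ℝ))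
  have hmes_uy : Measurable (fun p : ℝ × ℝ => fderiv ℝ u p ((0:ℝ), (1:ℝ))) :=
    measurable_fderiv_apply_const ℝ u ((0:ℝ), (1:ℝ))
  have hmes_D : Measurable (fun p : ℝ × ℝ => ‖fderiv ℝ u p‖ ^ 2) :=
    ((measurable_fderiv ℝ u).norm).pow_const 2
  have hmes_chi : Measurable (fun p : ℝ × ℝ => if 0 < u p then max (A - B * p.2) 0 else 0) := by
    refine Measurable.ite ?_ ?_ measurable_const
    · exact measurableSet_lt measurable_const hu_cont.measurable
    · exact ((continuous_const.sub (continuous_const.mul continuous_snd)).max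
        continuous_const).measurable
  -- bounds for χ
  have hchi_nonneg : ∀ p : ℝ × ℝ, 0 ≤ (if 0 < u p then max (A - B * p.2) 0 else 0) := by
    intro p; split <;> simp [le_max_right]
  have hchi_le : ∀ p ∈ Ioo (0:ℝ) 1 ×ˢ Ioo 0 T,
      ‖(if 0 < u p then max (A - B * p.2) 0 else 0)‖ ≤ A := by
    intro p hp
    have hy : 0 < p.2 := hp.2.1
    have h1 : (if 0 < u p then max (A - B * p.2) 0 else 0) ≤ A := by
      split
      · exact max_le (by nlinarith) hA.le
      · exact hA.le
    rw [Real.norm_eq_abs, abs_of_nonneg (hchi_nonneg p)]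
    exact h1
  have hRfin : volume (Ioo (0:ℝ) 1 ×ˢ Ioo 0 T) ≠ ⊤ := by
    rw [Measure.volume_eq_prod, Measure.prod_prod]
    exact (ENNReal.mul_lt_top measure_Ioo_lt_top measure_Ioo_lt_top).ne
  -- χ integrable on R
  have hchi_int : IntegrableOn (fun p : ℝ × ℝ => if 0 < u p then max (A - B * p.2) 0 else 0)
      (Ioo (0:ℝ) 1 ×ˢ Ioo 0 T) := by
    refine Measure.integrableOn_of_bounded (M := A) hRfin hmes_chi.aestronglyMeasurable ?_
    exact (ae_restrict_iff' hRm).2 (Filter.Eventually.of_forall hchi_le)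
  -- the slice energy
  set S : ℝ → ℝ := fun x => ∫ y, ((fderiv ℝ u (x, y)) ((0:ℝ),(1:ℝ)) ^ 2 +
      if 0 < u (x, y) then max (A - B * y) 0 else 0) ∂(volume.restrict (Ioo (0:ℝ) T)) with hSdef
  -- integrability of the vertical-derivative part
  have hG_int : IntegrableOn (fun p : ℝ × ℝ => (fderiv ℝ u p ((0:ℝ),(1:ℝ))) ^ 2 +
      (if 0 < u p then max (A - B * p.2) 0 else 0)) (Ioo (0:ℝ) 1 ×ˢ Ioo 0 T) := by
    refine Integrable.add ?_ hchi_int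
    refine hu_int.mono' ((hmes_uy.pow_const 2).aestronglyMeasurable) ?_
    refine Filter.Eventually.of_forall fun p => ?_
    have h1 := opnorm_sq_ge (fderiv ℝ u p)
    have h2 := sq_nonneg (fderiv ℝ u p ((1:ℝ),(0:ℝ)))
    rw [Real.norm_eq_abs, abs_of_nonneg (sq_nonneg _)]
    linarith
  have hux2_int : IntegrableOn (fun p : ℝ × ℝ => (fderiv ℝ u p ((1:ℝ),(0:ℝ))) ^ 2)
      (Ioo (0:ℝ) 1 ×ˢ Ioo 0 T) := by
    refine hu_int.mono' ((hmes_ux.pow_const 2).aestronglyMeasurable) ?_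
    refine Filter.Eventually.of_forall fun p => ?_
    have h1 := opnorm_sq_ge (fderiv ℝ u p)
    have h2 := sq_nonneg (fderiv ℝ u p ((0:ℝ),(1:ℝ)))
    rw [Real.norm_eq_abs, abs_of_nonneg (sq_nonneg _)]
    linarith
  have hEnergy_int : IntegrableOn (fun p : ℝ × ℝ => ‖fderiv ℝ u p‖ ^ 2 +
      (if 0 < u p then max (A - B * p.2) 0 else 0)) (Ioo (0:ℝ) 1 ×ˢ Ioo 0 T) :=
    hu_int.add hchi_int
  -- step 1 : lower bound for the energy
  have step1 : (∫ p in Ioo (0:ℝ) 1 ×ˢ Ioo 0 T, (fderiv ℝ u p ((1:ℝ),(0:ℝ))) ^ 2) +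
      (∫ p in Ioo (0:ℝ) 1 ×ˢ Ioo 0 T, ((fderiv ℝ u p ((0:ℝ),(1:ℝ))) ^ 2 +
        (if 0 < u p then max (A - B * p.2) 0 else 0)))
      ≤ ∫ p in Ioo (0:ℝ) 1 ×ˢ Ioo 0 T, (‖fderiv ℝ u p‖ ^ 2 +
        (if 0 < u p then max (A - B * p.2) 0 else 0)) := by
    rw [← integral_add hux2_int hG_int]
    refine setIntegral_mono_on (hux2_int.add hG_int) hEnergy_int hRm ?_
    intro p _
    have h1 := opnorm_sq_ge (fderiv ℝ u p)
    linarith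
  -- step 2 : Fubini for the vertical part
  have hG_int' : Integrable (fun p : ℝ × ℝ => (fderiv ℝ u p ((0:ℝ),(1:ℝ))) ^ 2 +
      (if 0 < u p then max (A - B * p.2) 0 else 0))
      ((volume.restrict (Ioo (0:ℝ) 1)).prod (volume.restrict (Ioo (0:ℝ) T))) := by
    rw [← hprod]; exact hG_int
  have step2 : (∫ p in Ioo (0:ℝ) 1 ×ˢ Ioo 0 T, ((fderiv ℝ u p ((0:ℝ),(1:ℝ))) ^ 2 +
      (if 0 < u p then max (A - B * p.2) 0 else 0))) = ∫ x in Ioo (0:ℝ) 1, S x := by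
    rw [hprod]
    rw [MeasureTheory.integral_prod _ hG_int']
  have hS_int : Integrable S (volume.restrict (Ioo (0:ℝ) 1)) := hG_int'.integral_prod_left
  -- a.e. goodness of slices
  have hu_int' : Integrable (fun p : ℝ × ℝ => ‖fderiv ℝ u p‖ ^ 2)
      ((volume.restrict (Ioo (0:ℝ) 1)).prod (volume.restrict (Ioo (0:ℝ) T))) := by
    rw [← hprod]; exact hu_int
  have hgood : ∀ᵐ x ∂(volume.restrict (Ioo (0:ℝ) 1)), u (x, 0) = 1 ∧
      Integrable (fun y => ‖fderiv ℝ u (x, y)‖ ^ 2) (volume.restrict (Ioo (0:ℝ) T)) := by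
    filter_upwards [ae_restrict_of_ae hu_bdry, hu_int'.prod_right_ae] with x h1 h2
    exact ⟨h1, h2⟩
  -- existence of a nearly-minimal good slice
  have hexists : ∀ ε : ℝ, 0 < ε → ∃ x0 : ℝ, (u (x0, 0) = 1 ∧
      Integrable (fun y => ‖fderiv ℝ u (x0, y)‖ ^ 2) (volume.restrict (Ioo (0:ℝ) T))) ∧
      S x0 ≤ (∫ x in Ioo (0:ℝ) 1, S x) + ε := by
    intro ε hε
    by_contra hcon
    push_neg at hcon
    have hae : ∀ᵐ x ∂(volume.restrict (Ioo (0:ℝ) 1)),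
        (∫ x in Ioo (0:ℝ) 1, S x) + ε ≤ S x := by
      filter_upwards [hgood] with x hx
      exact (hcon x ⟨hx.1, hx.2⟩).le
    have h1 : ∫ x in Ioo (0:ℝ) 1, ((∫ x in Ioo (0:ℝ) 1, S x) + ε) ≤ ∫ x in Ioo (0:ℝ) 1, S x :=
      integral_mono_ae (integrable_const _) hS_int hae
    rw [setIntegral_const] at h1
    have h2 : volume.real (Ioo (0:ℝ) 1) = 1 := by simp
    rw [h2, one_smul] at h1
    linarith
  -- the key comparison with the vertical extension of a good slice
  have hcompare : ∀ x0 : ℝ, u (x0, 0) = 1 →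
      Integrable (fun y => ‖fderiv ℝ u (x0, y)‖ ^ 2) (volume.restrict (Ioo (0:ℝ) T)) →
      (∫ p in Ioo (0:ℝ) 1 ×ˢ Ioo 0 T, (‖fderiv ℝ u p‖ ^ 2 +
        if 0 < u p then max (A - B * p.2) 0 else 0)) ≤ S x0 := by
    intro x0 hb0 hint0
    set v : ℝ × ℝ → ℝ := fun p => u (x0, p.2) with hvdef
    have hv_diff : Differentiable ℝ v :=
      hu_diff.comp ((differentiable_const x0).prodMk differentiable_snd)
    have hvd : ∀ p : ℝ × ℝ, HasFDerivAt v
        ((fderiv ℝ u (x0, p.2)).comp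
          (((0 : ℝ × ℝ →L[ℝ] ℝ)).prod (ContinuousLinearMap.snd ℝ ℝ ℝ))) p := by
      intro p
      exact ((hu_diff (x0, p.2)).hasFDerivAt).comp p
        ((hasFDerivAt_const x0 p).prodMk hasFDerivAt_snd)
    have hvnorm : ∀ p : ℝ × ℝ, ‖fderiv ℝ v p‖ ≤ |fderiv ℝ u (x0, p.2) ((0:ℝ),(1:ℝ))| := by
      intro p
      rw [(hvd p).fderiv]
      refine ContinuousLinearMap.opNorm_le_bound _ (abs_nonneg _) fun z => ?_
      have h0 : ((0 : ℝ), z.2) = z.2 • ((0:ℝ), (1:ℝ)) := by simp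
      have h1 : (fderiv ℝ u (x0, p.2)).comp
          (((0 : ℝ × ℝ →L[ℝ] ℝ)).prod (ContinuousLinearMap.snd ℝ ℝ ℝ)) z
          = z.2 * fderiv ℝ u (x0, p.2) ((0:ℝ),(1:ℝ)) := by
        simp only [ContinuousLinearMap.comp_apply, ContinuousLinearMap.prod_apply,
          ContinuousLinearMap.zero_apply, ContinuousLinearMap.coe_snd']
        rw [show ((0:ℝ), Prod.snd z) = z.2 • ((0:ℝ), (1:ℝ)) by simp,
          (fderiv ℝ u (x0, p.2)).map_smul]
        simp [smul_eq_mul]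
      rw [h1, Real.norm_eq_abs, abs_mul]
      calc |z.2| * |fderiv ℝ u (x0, p.2) ((0:ℝ),(1:ℝ))|
          ≤ ‖z‖ * |fderiv ℝ u (x0, p.2) ((0:ℝ),(1:ℝ))| := by
            refine mul_le_mul_of_nonneg_right ?_ (abs_nonneg _)
            simpa using norm_snd_le z
        _ = |fderiv ℝ u (x0, p.2) ((0:ℝ),(1:ℝ))| * ‖z‖ := mul_comm _ _
    have hmes_vD : Measurable (fun p : ℝ × ℝ => ‖fderiv ℝ v p‖ ^ 2) :=
      ((measurable_fderiv ℝ v).norm).pow_const 2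
    -- integrability of `‖fderiv v‖²` on the box
    have hdom_int : Integrable (fun p : ℝ × ℝ => ‖fderiv ℝ u (x0, p.2)‖ ^ 2)
        ((volume.restrict (Ioo (0:ℝ) 1)).prod (volume.restrict (Ioo (0:ℝ) T))) := by
      refine integrable_comp_snd ?_ hint0
      have : Measurable (fun y : ℝ => ‖fderiv ℝ u (x0, y)‖ ^ 2) :=
        (((measurable_fderiv ℝ u).comp (measurable_const.prodMk measurable_id)).norm).pow_const 2
      exact (this.comp measurable_snd).aestronglyMeasurable
    have hv_int : IntegrableOn (fun p : ℝ × ℝ => ‖fderiv ℝ v p‖ ^ 2)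
        (Ioo (0:ℝ) 1 ×ˢ Ioo 0 T) := by
      rw [IntegrableOn, hprod]
      refine hdom_int.mono' hmes_vD.aestronglyMeasurable ?_
      refine Filter.Eventually.of_forall fun p => ?_
      rw [Real.norm_eq_abs, abs_of_nonneg (sq_nonneg _)]
      have h1 := hvnorm p
      have h2 := opnorm_sq_ge (fderiv ℝ u (x0, p.2))
      have h3 : ‖fderiv ℝ v p‖ ^ 2 ≤ (fderiv ℝ u (x0, p.2) ((0:ℝ),(1:ℝ))) ^ 2 := by
        rw [← sq_abs (fderiv ℝ u (x0, p.2) ((0:ℝ),(1:ℝ)))]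
        exact pow_le_pow_left₀ (norm_nonneg _) h1 2
      nlinarith [sq_nonneg (fderiv ℝ u (x0, p.2) ((1:ℝ),(0:ℝ)))]
    -- apply minimality
    have hEuv := hmin v hv_diff (fun x y => rfl)
      (Filter.Eventually.of_forall fun x => hb0) hv_int
    -- bound the energy of v by S x0
    have hg2_int : Integrable (fun p : ℝ × ℝ => (fderiv ℝ u (x0, p.2) ((0:ℝ),(1:ℝ))) ^ 2 +
        (if 0 < u (x0, p.2) then max (A - B * p.2) 0 else 0))
        ((volume.restrict (Ioo (0:ℝ) 1)).prod (volume.restrict (Ioo (0:ℝ) T))) := by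
      have hmes1 : Measurable (fun y : ℝ => (fderiv ℝ u (x0, y) ((0:ℝ),(1:ℝ))) ^ 2) :=
        ((measurable_fderiv_apply_const ℝ u ((0:ℝ),(1:ℝ))).comp
          (measurable_const.prodMk measurable_id)).pow_const 2
      have hmes2 : Measurable (fun y : ℝ => if 0 < u (x0, y) then max (A - B * y) 0 else 0) := by
        refine Measurable.ite ?_ ?_ measurable_const
        · exact measurableSet_lt measurable_const
            (hu_cont.comp (continuous_const.prodMk continuous_id)).measurable
        · exact ((continuous_const.sub (continuous_const.mul continuous_id)).max
            continuous_const).measurable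
      have hint1 : Integrable (fun y : ℝ => (fderiv ℝ u (x0, y) ((0:ℝ),(1:ℝ))) ^ 2)
          (volume.restrict (Ioo (0:ℝ) T)) := by
        refine hint0.mono' hmes1.aestronglyMeasurable ?_
        refine Filter.Eventually.of_forall fun y => ?_
        rw [Real.norm_eq_abs, abs_of_nonneg (sq_nonneg _)]
        have h1 := opnorm_sq_ge (fderiv ℝ u (x0, y))
        nlinarith [sq_nonneg (fderiv ℝ u (x0, y) ((1:ℝ),(0:ℝ)))]
      have hint2 : Integrable (fun y : ℝ => if 0 < u (x0, y) then max (A - B * y) 0 else 0)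
          (volume.restrict (Ioo (0:ℝ) T)) := by
        refine Measure.integrableOn_of_bounded (M := A) (by simpa using measure_Ioo_lt_top.ne)
          hmes2.aestronglyMeasurable ?_
        refine (ae_restrict_iff' hRym).2 (Filter.Eventually.of_forall fun y hy => ?_)
        have hy0 : 0 < y := hy.1
        have h1 : (if 0 < u (x0, y) then max (A - B * y) 0 else 0) ≤ A := by
          split
          · exact max_le (by nlinarith) hA.le
          · exact hA.le
        have h2 : 0 ≤ (if 0 < u (x0, y) then max (A - B * y) 0 else 0) := by
          split <;> simp [le_max_right]
        rw [Real.norm_eq_abs, abs_of_nonneg h2]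
        exact h1
      have p1 := integrable_comp_snd (μ := volume.restrict (Ioo (0:ℝ) 1))
        ((hmes1.comp measurable_snd).aestronglyMeasurable) hint1
      have p2 := integrable_comp_snd (μ := volume.restrict (Ioo (0:ℝ) 1))
        ((hmes2.comp measurable_snd).aestronglyMeasurable) hint2
      exact p1.add p2
    have hEv_le : (∫ p in Ioo (0:ℝ) 1 ×ˢ Ioo 0 T, (‖fderiv ℝ v p‖ ^ 2 +
        if 0 < v p then max (A - B * p.2) 0 else 0)) ≤ S x0 := by
      have hg2_int' : IntegrableOn (fun p : ℝ × ℝ => (fderiv ℝ u (x0, p.2) ((0:ℝ),(1:ℝ))) ^ 2 +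
          (if 0 < u (x0, p.2) then max (A - B * p.2) 0 else 0)) (Ioo (0:ℝ) 1 ×ˢ Ioo 0 T) := by
        rw [IntegrableOn, hprod]; exact hg2_int
      have hlhs_int : IntegrableOn (fun p : ℝ × ℝ => ‖fderiv ℝ v p‖ ^ 2 +
          (if 0 < v p then max (A - B * p.2) 0 else 0)) (Ioo (0:ℝ) 1 ×ˢ Ioo 0 T) := by
        refine hv_int.add ?_
        refine hg2_int'.mono' ?_ ?_
        · refine (Measurable.ite ?_ ?_ measurable_const).aestronglyMeasurable
          · exact measurableSet_lt measurable_const hv_diff.continuous.measurable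
          · exact ((continuous_const.sub (continuous_const.mul continuous_snd)).max
              continuous_const).measurable
        · refine Filter.Eventually.of_forall fun p => ?_
          have h2 : 0 ≤ (if 0 < v p then max (A - B * p.2) 0 else 0) := by
            split <;> simp [le_max_right]
          rw [Real.norm_eq_abs, abs_of_nonneg h2]
          have : (if 0 < v p then max (A - B * p.2) 0 else 0)
              = (if 0 < u (x0, p.2) then max (A - B * p.2) 0 else 0) := rfl
          rw [this]
          nlinarith [sq_nonneg (fderiv ℝ u (x0, p.2) ((0:ℝ),(1:ℝ)))]
      have h4 : (∫ p in Ioo (0:ℝ) 1 ×ˢ Ioo 0 T, (‖fderiv ℝ v p‖ ^ 2 +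
          if 0 < v p then max (A - B * p.2) 0 else 0))
          ≤ ∫ p in Ioo (0:ℝ) 1 ×ˢ Ioo 0 T, ((fderiv ℝ u (x0, p.2) ((0:ℝ),(1:ℝ))) ^ 2 +
            (if 0 < u (x0, p.2) then max (A - B * p.2) 0 else 0)) := by
        refine setIntegral_mono_on hlhs_int hg2_int' hRm ?_
        intro p _
        have h3 : ‖fderiv ℝ v p‖ ^ 2 ≤ (fderiv ℝ u (x0, p.2) ((0:ℝ),(1:ℝ))) ^ 2 := by
          rw [← sq_abs (fderiv ℝ u (x0, p.2) ((0:ℝ),(1:ℝ)))]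
          exact pow_le_pow_left₀ (norm_nonneg _) (hvnorm p) 2
        have : (if 0 < v p then max (A - B * p.2) 0 else 0)
            = (if 0 < u (x0, p.2) then max (A - B * p.2) 0 else 0) := rfl
        rw [this]
        linarith
      have h5 : (∫ p in Ioo (0:ℝ) 1 ×ˢ Ioo 0 T,
          ((fderiv ℝ u (x0, p.2) ((0:ℝ),(1:ℝ))) ^ 2 +
            (if 0 < u (x0, p.2) then max (A - B * p.2) 0 else 0))) = S x0 := by
        rw [hprod, MeasureTheory.integral_prod _ hg2_int]
        have : (fun x : ℝ => ∫ y, ((fderiv ℝ u (x0, y) ((0:ℝ),(1:ℝ))) ^ 2 +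
            (if 0 < u (x0, y) then max (A - B * y) 0 else 0))
            ∂(volume.restrict (Ioo (0:ℝ) T))) = fun _ => S x0 := rfl
        rw [this, integral_const, measureReal_restrict_apply_univ]
        simp
      linarith
    exact hEuv.trans hEv_le
  -- the horizontal derivative has vanishing Dirichlet energy
  have hIux : (∫ p in Ioo (0:ℝ) 1 ×ˢ Ioo 0 T, (fderiv ℝ u p ((1:ℝ),(0:ℝ))) ^ 2) = 0 := by
    have hub : ∀ ε : ℝ, 0 < ε →
        (∫ p in Ioo (0:ℝ) 1 ×ˢ Ioo 0 T, (fderiv ℝ u p ((1:ℝ),(0:ℝ))) ^ 2) ≤ 0 + ε := by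
      intro ε hε
      obtain ⟨x0, ⟨hb0, hint0⟩, hS0⟩ := hexists ε hε
      have h2 := hcompare x0 hb0 hint0
      linarith [step1, step2]
    have h0 : 0 ≤ ∫ p in Ioo (0:ℝ) 1 ×ˢ Ioo 0 T, (fderiv ℝ u p ((1:ℝ),(0:ℝ))) ^ 2 :=
      setIntegral_nonneg hRm fun p _ => sq_nonneg _
    have h1 := le_of_forall_pos_le_add hub
    linarith
  -- hence the horizontal derivative vanishes a.e.
  have hux_ae : ∀ᵐ p ∂((volume.restrict (Ioo (0:ℝ) 1)).prod (volume.restrict (Ioo (0:ℝ) T))),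
      fderiv ℝ u p ((1:ℝ),(0:ℝ)) = 0 := by
    have h1 := (setIntegral_eq_zero_iff_of_nonneg_ae
      (Filter.Eventually.of_forall fun p => sq_nonneg (fderiv ℝ u p ((1:ℝ),(0:ℝ))))
      hux2_int).1 hIux
    rw [← hprod]
    filter_upwards [h1] with p hp
    have hp' : (fderiv ℝ u p ((1:ℝ),(0:ℝ))) ^ 2 = 0 := by simpa using hp
    exact pow_eq_zero_iff two_ne_zero |>.1 hp'
  -- swap the order of the a.e. quantifiers
  have hms : MeasurableSet {p : ℝ × ℝ | fderiv ℝ u p ((1:ℝ),(0:ℝ)) = 0} :=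
    measurableSet_eq_fun hmes_ux measurable_const
  have hswap : ∀ᵐ y ∂(volume.restrict (Ioo (0:ℝ) T)), ∀ᵐ x ∂(volume.restrict (Ioo (0:ℝ) 1)),
      fderiv ℝ u (x, y) ((1:ℝ),(0:ℝ)) = 0 := by
    have h2 := (Measure.ae_prod_iff_ae_ae hms).1 hux_ae
    exact (Measure.ae_ae_comm hms).1 h2
  -- fundamental theorem of calculus on horizontal slices
  have hslice : ∀ᵐ y ∂(volume.restrict (Ioo (0:ℝ) T)),
      ∀ x ∈ Ioo (0:ℝ) 1, u (x, y) = u (0, y) := by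
    filter_upwards [hswap] with y hy
    intro x hx
    have hd : ∀ t : ℝ, HasDerivAt (fun s => u (s, y)) (fderiv ℝ u (t, y) ((1:ℝ),(0:ℝ))) t := by
      intro t
      have h3 := ((hu_diff (t, y)).hasFDerivAt).comp_hasDerivAt t
        ((hasDerivAt_id t).prodMk (hasDerivAt_const t y))
      simpa [Function.comp_def] using h3
    have hzero : (fun t : ℝ => fderiv ℝ u (t, y) ((1:ℝ),(0:ℝ)))
        =ᵐ[volume.restrict (Ioc (0:ℝ) x)] 0 := by
      refine ae_restrict_of_ae_restrict_of_subset ?_ hy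
      intro t ht
      exact ⟨ht.1, lt_of_le_of_lt ht.2 hx.2⟩
    have hii : IntervalIntegrable (fun t => fderiv ℝ u (t, y) ((1:ℝ),(0:ℝ))) volume 0 x := by
      rw [intervalIntegrable_iff_integrableOn_Ioc_of_le hx.1.le]
      exact (integrable_zero _ _ _).congr hzero.symm
    have hftc := intervalIntegral.integral_eq_sub_of_hasDerivAt
      (f := fun s => u (s, y)) (fun t _ => hd t) hii
    have hzero' : (∫ t in (0:ℝ)..x, fderiv ℝ u (t, y) ((1:ℝ),(0:ℝ))) = 0 := by
      rw [intervalIntegral.integral_of_le hx.1.le]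
      exact integral_eq_zero_of_ae hzero
    rw [hzero'] at hftc
    have := hftc.symm
    linarith [this]
  -- conclusion
  refine ⟨fun y => u (0, y), ?_⟩
  rw [hprod]
  have hms2 : MeasurableSet {p : ℝ × ℝ | u p = u (0, p.2)} :=
    measurableSet_eq_fun hu_cont.measurable
      (hu_cont.comp (continuous_const.prodMk continuous_snd)).measurable
  refine (Measure.ae_prod_iff_ae_ae hms2).2 ?_
  refine (Measure.ae_ae_comm hms2).2 ?_
  filter_upwards [hslice] with y hy
  filter_upwards [ae_restrict_mem hRxm] with x hx
  exact hy x hx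
end
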